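/- Let G = (V,E) be a finite graph, ν a probability distribution on the subsets of E, and P the divide-and-color measure on {−1,1}^V induced by ν. Let M(σ) := (1/|V|)·Σ_{v∈V} σ_v be the average magnetization, and let ν' be a probability distribution of a random subset 𝒰 of V, independent of everything, with revealment δ. Then E[clue(M|𝒰)] ≤ δ · (Σ_{v∈V} E_ν[|C_v^𝒩|²]) / (Σ_{v∈V} E_ν[|C_v^𝒩|]), where E_ν denotes expectation over 𝒩 ∼ ν and |C_v^N| is the size of the cluster of v in (V,N). -/

import Mathlib

open Finset

namespace SR

/-- `p` is a probability mass function on the finite type `X`. -/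
def IsPMF {X : Type*} [Fintype X] (p : X → ℝ) : Prop :=
  (∀ x, 0 ≤ p x) ∧ ∑ x : X, p x = 1

/-- Expectation of `f` under the pmf `p`. -/
noncomputable def pexp {X : Type*} [Fintype X] (p f : X → ℝ) : ℝ := ∑ x : X, p x * f x

/-- Variance of `f` under the pmf `p`. -/
noncomputable def pvar {X : Type*} [Fintype X] (p f : X → ℝ) : ℝ :=
  ∑ x : X, p x * (f x - pexp p f) ^ 2

/-- Conditional expectation of `f` given the coordinates in `U`. -/
noncomputable def cexp {V : Type*} [Fintype V] [DecidableEq V]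
    {Ω : Type*} [Fintype Ω] [DecidableEq Ω]
    (p : (V → Ω) → ℝ) (U : Finset V) (f : (V → Ω) → ℝ) : (V → Ω) → ℝ :=
  fun ω =>
    (∑ ω' ∈ univ.filter (fun ω' : V → Ω => ∀ v ∈ U, ω' v = ω v), p ω' * f ω') /
      ∑ ω' ∈ univ.filter (fun ω' : V → Ω => ∀ v ∈ U, ω' v = ω v), p ω'

/-- `clue(f|U) = Var(E[f|F_U])/Var(f)`, with the convention that it is `0` when `Var f = 0`. -/
noncomputable def clue {V : Type*} [Fintype V] [DecidableEq V]
    {Ω : Type*} [Fintype Ω] [DecidableEq Ω]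
    (p : (V → Ω) → ℝ) (f : (V → Ω) → ℝ) (U : Finset V) : ℝ :=
  if pvar p f = 0 then 0 else pvar p (cexp p U f) / pvar p f

/-- `ν` is a probability distribution on the subsets of `V` (a random subset of `V`). -/
def IsSubsetDist {V : Type*} [Fintype V] (ν : Finset V → ℝ) : Prop :=
  (∀ S, 0 ≤ ν S) ∧ ∑ S : Finset V, ν S = 1

/-- Expected clue `E[clue(f|𝒰)]` for a random subset with distribution `ν`. -/
noncomputable def eClue {V : Type*} [Fintype V] [DecidableEq V]
    {Ω : Type*} [Fintype Ω] [DecidableEq Ω]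
    (p : (V → Ω) → ℝ) (f : (V → Ω) → ℝ) (ν : Finset V → ℝ) : ℝ :=
  ∑ S : Finset V, ν S * clue p f S

/-- The revealment `δ(𝒰) = max_v P[v ∈ 𝒰]` of a random subset with distribution `ν`. -/
noncomputable def revealment {V : Type*} [Fintype V] [DecidableEq V] (ν : Finset V → ℝ) : ℝ :=
  sSup (Set.range fun v : V => ∑ S ∈ univ.filter (fun S : Finset V => v ∈ S), ν S)

/-- The spin `±1 ∈ ℝ` associated to a Boolean value. -/
noncomputable def spinR (b : Bool) : ℝ := if b then 1 else -1

end SR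

namespace SR

open Finset

variable {V : Type*} [Fintype V] [DecidableEq V]

/-- `v` and `w` lie in the same cluster of the percolation configuration `N ⊆ E`. -/
def sameCluster (N : Finset (Sym2 V)) (v w : V) : Prop :=
  (SimpleGraph.fromEdgeSet (↑N : Set (Sym2 V))).Reachable v w

/-- The size `|C_v^N|` of the cluster of `v` in `(V, N)`. -/
noncomputable def clusterSize (N : Finset (Sym2 V)) (v : V) : ℕ :=
  Set.ncard {w : V | sameCluster N v w}

/-- The configuration `σ` is constant on every cluster of `(V, N)`. -/
def constOnClusters (N : Finset (Sym2 V)) (σ : V → Bool) : Prop :=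
  ∀ v w : V, sameCluster N v w → σ v = σ w

open scoped Classical in
/-- The uniform measure `P_N` on configurations that are constant on the clusters of `(V,N)`. -/
noncomputable def dacCond (N : Finset (Sym2 V)) : (V → Bool) → ℝ :=
  fun σ => if constOnClusters N σ
    then ((Set.ncard {τ : V → Bool | constOnClusters N τ} : ℝ))⁻¹ else 0

/-- The divide-and-color measure `P = Σ_N ν(N)·P_N` induced by an edge percolation `ν`. -/
noncomputable def dacPMF (ν : Finset (Sym2 V) → ℝ) : (V → Bool) → ℝ :=
  fun σ => ∑ N : Finset (Sym2 V), ν N * dacCond N σ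


open scoped Classical

lemma sameCluster_refl (N : Finset (Sym2 V)) (v : V) : sameCluster N v v :=
  SimpleGraph.Reachable.refl v

lemma sameCluster_symm {N : Finset (Sym2 V)} {v w : V} (h : sameCluster N v w) :
    sameCluster N w v := h.symm

lemma sameCluster_trans {N : Finset (Sym2 V)} {u v w : V} (h1 : sameCluster N u v)
    (h2 : sameCluster N v w) : sameCluster N u w := h1.trans h2

noncomputable def flipC (N : Finset (Sym2 V)) (x : V) (ω : V → Bool) : V → Bool :=
  fun v => if sameCluster N x v then !ω v else ω v

lemma flipC_flipC (N : Finset (Sym2 V)) (x : V) (ω : V → Bool) :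
    flipC N x (flipC N x ω) = ω := by
  funext v; by_cases h : sameCluster N x v <;> simp [flipC, h]

lemma flipC_self (N : Finset (Sym2 V)) (x : V) (ω : V → Bool) :
    flipC N x ω x = !ω x := by simp [flipC, sameCluster_refl]

lemma flipC_ne (N : Finset (Sym2 V)) (x : V) (ω : V → Bool) : flipC N x ω ≠ ω := by
  intro h
  have := congrFun h x
  rw [flipC_self] at this
  exact (Bool.not_ne_self (ω x)) this

lemma flipC_of_not (N : Finset (Sym2 V)) {x v : V} (ω : V → Bool)
    (h : ¬ sameCluster N x v) : flipC N x ω v = ω v := by simp [flipC, h]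

lemma constOn_flipC {N : Finset (Sym2 V)} {x : V} {ω : V → Bool}
    (h : constOnClusters N ω) : constOnClusters N (flipC N x ω) := by
  intro v w hvw
  by_cases hv : sameCluster N x v
  · have hw : sameCluster N x w := sameCluster_trans hv hvw
    simp [flipC, hv, hw, h v w hvw]
  · have hw : ¬ sameCluster N x w := fun hw => hv (sameCluster_trans hw (sameCluster_symm hvw))
    simp [flipC, hv, hw, h v w hvw]

lemma constOn_flipC_iff {N : Finset (Sym2 V)} {x : V} {ω : V → Bool} :
    constOnClusters N (flipC N x ω) ↔ constOnClusters N ω := by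
  constructor
  · intro h; have := constOn_flipC (x := x) h; rwa [flipC_flipC] at this
  · exact constOn_flipC

lemma dacCond_flipC (N : Finset (Sym2 V)) (x : V) (ω : V → Bool) :
    dacCond N (flipC N x ω) = dacCond N ω := by
  simp only [dacCond]
  by_cases h : constOnClusters N ω <;> simp [h, constOn_flipC_iff]

lemma dacCond_nonneg (N : Finset (Sym2 V)) (ω : V → Bool) : 0 ≤ dacCond N ω := by
  simp only [dacCond]
  split
  · positivity
  · exact le_rfl

lemma constOnClusters_of_ne {N : Finset (Sym2 V)} {ω : V → Bool}
    (h : dacCond N ω ≠ 0) : constOnClusters N ω := by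
  by_contra hc; simp [dacCond, hc] at h


/-- the finset of cluster-constant configurations -/
noncomputable def constFinset (N : Finset (Sym2 V)) : Finset (V → Bool) :=
  univ.filter (fun τ => constOnClusters N τ)

lemma ncard_eq_card (N : Finset (Sym2 V)) :
    Set.ncard {τ : V → Bool | constOnClusters N τ} = (constFinset N).card := by
  rw [Set.ncard_eq_toFinset_card']
  congr 1
  ext τ
  simp [constFinset]

lemma constFinset_nonempty (N : Finset (Sym2 V)) : (constFinset N).Nonempty :=
  ⟨fun _ => false, by rw [constFinset, Finset.mem_filter]; exact ⟨Finset.mem_univ _, fun _ _ _ => rfl⟩⟩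

lemma dacCond_eq (N : Finset (Sym2 V)) (ω : V → Bool) :
    dacCond N ω = if constOnClusters N ω then ((constFinset N).card : ℝ)⁻¹ else 0 := by
  rw [dacCond, ncard_eq_card]

lemma sum_dacCond (N : Finset (Sym2 V)) : ∑ ω : V → Bool, dacCond N ω = 1 := by
  classical
  rw [Finset.sum_congr rfl (fun ω _ => dacCond_eq N ω)]
  rw [Finset.sum_ite, Finset.sum_const_zero, add_zero, Finset.sum_const, nsmul_eq_mul]
  have h : (univ.filter (fun ω : V → Bool => constOnClusters N ω)) = constFinset N := rfl
  rw [h, mul_inv_cancel₀]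
  exact Nat.cast_ne_zero.mpr (Finset.card_pos.mpr (constFinset_nonempty N)).ne'

/-- master involution lemma -/
lemma sum_flip_zero (N : Finset (Sym2 V)) (x : V) (T : Finset (V → Bool))
    (hT : ∀ ω ∈ T, flipC N x ω ∈ T) (F : (V → Bool) → ℝ)
    (hF : ∀ ω ∈ T, F (flipC N x ω) = - F ω) :
    ∑ ω ∈ T, F ω = 0 := by
  refine Finset.sum_involution (fun ω _ => flipC N x ω) (fun ω hω => ?_)
    (fun ω hω _ => flipC_ne N x ω) hT (fun ω hω => flipC_flipC N x ω)
  rw [hF ω hω]; ring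


lemma spinR_mul_self (b : Bool) : spinR b * spinR b = 1 := by
  cases b <;> simp [spinR]

lemma spinR_not (b : Bool) : spinR (!b) = - spinR b := by
  cases b <;> simp [spinR]

/-- two-point function of `P_N` -/
lemma sum_dacCond_two_point (N : Finset (Sym2 V)) (x y : V) :
    ∑ ω : V → Bool, dacCond N ω * (spinR (ω x) * spinR (ω y))
      = if sameCluster N x y then 1 else 0 := by
  by_cases h : sameCluster N x y
  · rw [if_pos h, ← sum_dacCond N]
    refine Finset.sum_congr rfl (fun ω _ => ?_)
    by_cases hc : constOnClusters N ω
    · rw [hc x y h, spinR_mul_self, mul_one]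
    · simp [dacCond, hc]
  · rw [if_neg h]
    refine sum_flip_zero N x univ (fun ω _ => Finset.mem_univ _) _ (fun ω _ => ?_)
    rw [dacCond_flipC, flipC_self, flipC_of_not N ω h, spinR_not]
    ring

/-- `w`'s cluster meets `U` -/
def touches (N : Finset (Sym2 V)) (U : Finset V) (w : V) : Prop :=
  ∃ u ∈ U, sameCluster N u w

noncomputable def fiber (U : Finset V) (ω : V → Bool) : Finset (V → Bool) :=
  univ.filter (fun ω' => ∀ v ∈ U, ω' v = ω v)

lemma mem_fiber {U : Finset V} {ω ω' : V → Bool} :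
    ω' ∈ fiber U ω ↔ ∀ v ∈ U, ω' v = ω v := by simp [fiber]

lemma self_mem_fiber {U : Finset V} {ω : V → Bool} : ω ∈ fiber U ω :=
  mem_fiber.mpr (fun _ _ => rfl)

lemma fiber_eq_of_agree {U : Finset V} {ω ω' : V → Bool}
    (h : ∀ v ∈ U, ω' v = ω v) : fiber U ω' = fiber U ω := by
  ext τ
  simp only [mem_fiber]
  exact ⟨fun ht v hv => (ht v hv).trans (h v hv), fun ht v hv => (ht v hv).trans (h v hv).symm⟩

lemma fiber_flip_mem {N : Finset (Sym2 V)} {U : Finset V} {ω ω' : V → Bool} {w : V}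
    (h : ¬ touches N U w) (hω' : ω' ∈ fiber U ω) : flipC N w ω' ∈ fiber U ω := by
  rw [mem_fiber] at hω' ⊢
  intro v hv
  rw [flipC_of_not N ω' (fun hs => h ⟨v, hv, sameCluster_symm hs⟩)]
  exact hω' v hv

lemma sum_fiber_spin_untouched (N : Finset (Sym2 V)) (U : Finset V) (ω : V → Bool) (w : V)
    (h : ¬ touches N U w) :
    ∑ ω' ∈ fiber U ω, dacCond N ω' * spinR (ω' w) = 0 := by
  refine sum_flip_zero N w _ (fun ω' hω' => fiber_flip_mem h hω') _ (fun ω' _ => ?_)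
  rw [dacCond_flipC, flipC_self, spinR_not]
  ring

lemma sum_fiber_spin_touched (N : Finset (Sym2 V)) (U : Finset V) (ω : V → Bool) (w u : V)
    (hu : u ∈ U) (huw : sameCluster N u w) :
    ∑ ω' ∈ fiber U ω, dacCond N ω' * spinR (ω' w)
      = spinR (ω u) * ∑ ω' ∈ fiber U ω, dacCond N ω' := by
  rw [Finset.mul_sum]
  refine Finset.sum_congr rfl (fun ω' hω' => ?_)
  by_cases hc : constOnClusters N ω'
  · rw [hc u w huw |>.symm, mem_fiber.mp hω' u hu]
    ring
  · simp [dacCond, hc]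

noncomputable def gfun (N : Finset (Sym2 V)) (U : Finset V) (ω : V → Bool) : ℝ :=
  (Fintype.card V : ℝ)⁻¹ *
    ∑ w : V, (if h : touches N U w then spinR (ω h.choose) else 0)

lemma gfun_congr {N : Finset (Sym2 V)} {U : Finset V} {ω ω' : V → Bool}
    (h : ∀ v ∈ U, ω' v = ω v) : gfun N U ω' = gfun N U ω := by
  unfold gfun
  congr 1
  refine Finset.sum_congr rfl (fun w _ => ?_)
  by_cases ht : touches N U w
  · rw [dif_pos ht, dif_pos ht, h ht.choose ht.choose_spec.1]
  · rw [dif_neg ht, dif_neg ht]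

/-- conditional expectation of the magnetization under `P_N`, fiberwise -/
lemma sum_fiber_M (N : Finset (Sym2 V)) (U : Finset V) (ω : V → Bool) :
    ∑ ω' ∈ fiber U ω, dacCond N ω' * ((Fintype.card V : ℝ)⁻¹ * ∑ v : V, spinR (ω' v))
      = (∑ ω' ∈ fiber U ω, dacCond N ω') * gfun N U ω := by
  have step1 : ∀ ω' : V → Bool,
      dacCond N ω' * ((Fintype.card V : ℝ)⁻¹ * ∑ v : V, spinR (ω' v))
        = (Fintype.card V : ℝ)⁻¹ * ∑ v : V, dacCond N ω' * spinR (ω' v) := by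
    intro ω'
    rw [Finset.mul_sum, Finset.mul_sum, Finset.mul_sum]
    exact Finset.sum_congr rfl (fun v _ => by ring)
  have L3 : ∀ v : V, ∑ ω' ∈ fiber U ω, dacCond N ω' * spinR (ω' v)
      = (if h : touches N U v then spinR (ω h.choose) else 0)
          * (∑ ω' ∈ fiber U ω, dacCond N ω') := by
    intro v
    by_cases ht : touches N U v
    · rw [dif_pos ht,
        sum_fiber_spin_touched N U ω v ht.choose ht.choose_spec.1 ht.choose_spec.2]
    · rw [dif_neg ht, sum_fiber_spin_untouched N U ω v ht, zero_mul]
  calc ∑ ω' ∈ fiber U ω, dacCond N ω' * ((Fintype.card V : ℝ)⁻¹ * ∑ v : V, spinR (ω' v))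
      = (Fintype.card V : ℝ)⁻¹ * ∑ ω' ∈ fiber U ω, ∑ v : V, dacCond N ω' * spinR (ω' v) := by
        rw [Finset.mul_sum]
        exact Finset.sum_congr rfl (fun ω' _ => step1 ω')
    _ = (Fintype.card V : ℝ)⁻¹ * ∑ v : V, ∑ ω' ∈ fiber U ω, dacCond N ω' * spinR (ω' v) := by
        rw [Finset.sum_comm]
    _ = (Fintype.card V : ℝ)⁻¹ * ∑ v : V, (if h : touches N U v then spinR (ω h.choose) else 0)
          * (∑ ω' ∈ fiber U ω, dacCond N ω') := by
        rw [Finset.sum_congr rfl (fun v _ => L3 v)]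
    _ = (∑ ω' ∈ fiber U ω, dacCond N ω') * gfun N U ω := by
        rw [← Finset.sum_mul, gfun]; ring


lemma sum_dacCond_gsq (N : Finset (Sym2 V)) (U : Finset V) :
    ∑ ω : V → Bool, dacCond N ω * (gfun N U ω) ^ 2
      = ((Fintype.card V : ℝ)⁻¹) ^ 2 *
          ∑ v : V, ∑ w : V,
            (if touches N U v ∧ sameCluster N v w then (1 : ℝ) else 0) := by
  have inner : ∀ v w : V,
      ∑ ω : V → Bool, dacCond N ω *
        ((if h : touches N U v then spinR (ω h.choose) else 0) *
         (if h : touches N U w then spinR (ω h.choose) else 0))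
      = (if touches N U v ∧ sameCluster N v w then (1 : ℝ) else 0) := by
    intro v w
    by_cases hv : touches N U v
    · by_cases hw : touches N U w
      · rw [Finset.sum_congr rfl (fun ω _ => by rw [dif_pos hv, dif_pos hw]),
          sum_dacCond_two_point N hv.choose hw.choose]
        have hiff : sameCluster N hv.choose hw.choose ↔ (touches N U v ∧ sameCluster N v w) := by
          constructor
          · intro h
            exact ⟨hv, sameCluster_trans (sameCluster_symm hv.choose_spec.2)
              (sameCluster_trans h hw.choose_spec.2)⟩
          · intro h
            exact sameCluster_trans hv.choose_spec.2
              (sameCluster_trans h.2 (sameCluster_symm hw.choose_spec.2))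
        by_cases h : sameCluster N hv.choose hw.choose
        · rw [if_pos h, if_pos (hiff.mp h)]
        · rw [if_neg h, if_neg (fun hh => h (hiff.mpr hh))]
      · have : ¬ (touches N U v ∧ sameCluster N v w) := by
          rintro ⟨_, hvw⟩
          exact hw ⟨hv.choose, hv.choose_spec.1, sameCluster_trans hv.choose_spec.2 hvw⟩
        rw [if_neg this]
        refine Finset.sum_eq_zero (fun ω _ => ?_)
        rw [dif_neg hw, mul_zero, mul_zero]
    · rw [if_neg (fun hh => hv hh.1)]
      refine Finset.sum_eq_zero (fun ω _ => ?_)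
      rw [dif_neg hv, zero_mul, mul_zero]
  calc ∑ ω : V → Bool, dacCond N ω * (gfun N U ω) ^ 2
      = ∑ ω : V → Bool, ((Fintype.card V : ℝ)⁻¹) ^ 2 *
          ∑ v : V, ∑ w : V, dacCond N ω *
            ((if h : touches N U v then spinR (ω h.choose) else 0) *
             (if h : touches N U w then spinR (ω h.choose) else 0)) := by
        refine Finset.sum_congr rfl (fun ω _ => ?_)
        have hsq : (∑ w : V, (if h : touches N U w then spinR (ω h.choose) else 0)) ^ 2
            = ∑ v : V, ∑ w : V,
                ((if h : touches N U v then spinR (ω h.choose) else 0) *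
                 (if h : touches N U w then spinR (ω h.choose) else 0)) := by
          rw [pow_two, Finset.sum_mul_sum]
        calc dacCond N ω * (gfun N U ω) ^ 2
            = ((Fintype.card V : ℝ)⁻¹) ^ 2 * (dacCond N ω * ∑ v : V, ∑ w : V,
                ((if h : touches N U v then spinR (ω h.choose) else 0) *
                 (if h : touches N U w then spinR (ω h.choose) else 0))) := by
              rw [gfun, mul_pow, hsq]; ring
          _ = _ := by
              congr 1
              rw [Finset.mul_sum]
              exact Finset.sum_congr rfl (fun v _ => by rw [Finset.mul_sum])
    _ = ((Fintype.card V : ℝ)⁻¹) ^ 2 * ∑ v : V, ∑ w : V,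
          ∑ ω : V → Bool, dacCond N ω *
            ((if h : touches N U v then spinR (ω h.choose) else 0) *
             (if h : touches N U w then spinR (ω h.choose) else 0)) := by
        rw [← Finset.mul_sum, Finset.sum_comm]
        congr 1
        exact Finset.sum_congr rfl (fun v _ => Finset.sum_comm)
    _ = ((Fintype.card V : ℝ)⁻¹) ^ 2 *
          ∑ v : V, ∑ w : V,
            (if touches N U v ∧ sameCluster N v w then (1 : ℝ) else 0) := by
        congr 1
        exact Finset.sum_congr rfl (fun v _ =>
          Finset.sum_congr rfl (fun w _ => inner v w))

lemma clusterSize_eq_card (N : Finset (Sym2 V)) (v : V) :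
    clusterSize N v = (univ.filter (fun w => sameCluster N v w)).card := by
  rw [clusterSize, Set.ncard_eq_toFinset_card']
  congr 1
  ext w
  simp

lemma clusterSize_congr {N : Finset (Sym2 V)} {u v : V} (h : sameCluster N u v) :
    clusterSize N v = clusterSize N u := by
  rw [clusterSize_eq_card, clusterSize_eq_card]
  congr 1
  ext w
  simp only [Finset.mem_filter, Finset.mem_univ, true_and]
  exact ⟨fun hh => sameCluster_trans h hh, fun hh => sameCluster_trans (sameCluster_symm h) hh⟩

lemma one_le_clusterSize (N : Finset (Sym2 V)) (v : V) : 1 ≤ clusterSize N v := by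
  rw [clusterSize_eq_card]
  exact Finset.card_pos.mpr ⟨v, by simp [sameCluster_refl]⟩

lemma sum_indicator_cluster (N : Finset (Sym2 V)) (v : V) (c : ℝ) :
    ∑ w : V, (if sameCluster N v w then c else 0) = (clusterSize N v : ℝ) * c := by
  rw [Finset.sum_ite, Finset.sum_const_zero, add_zero, Finset.sum_const, nsmul_eq_mul,
    clusterSize_eq_card]

lemma counting (N : Finset (Sym2 V)) (U : Finset V) :
    ∑ v : V, ∑ w : V, (if touches N U v ∧ sameCluster N v w then (1 : ℝ) else 0)
      ≤ ∑ u ∈ U, (clusterSize N u : ℝ) ^ 2 := by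
  have step1 : ∀ v : V,
      ∑ w : V, (if touches N U v ∧ sameCluster N v w then (1 : ℝ) else 0)
        = if touches N U v then (clusterSize N v : ℝ) else 0 := by
    intro v
    by_cases ht : touches N U v
    · rw [if_pos ht]
      have hcong : ∀ w : V, (if touches N U v ∧ sameCluster N v w then (1 : ℝ) else 0)
          = (if sameCluster N v w then (1 : ℝ) else 0) := by
        intro w
        by_cases h : sameCluster N v w
        · rw [if_pos ⟨ht, h⟩, if_pos h]
        · rw [if_neg (fun hh => h hh.2), if_neg h]
      rw [Finset.sum_congr rfl (fun w _ => hcong w), sum_indicator_cluster N v 1, mul_one]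
    · rw [if_neg ht]
      exact Finset.sum_eq_zero (fun w _ => if_neg (fun hh => ht hh.1))
  have step2 : ∀ v : V,
      (if touches N U v then (clusterSize N v : ℝ) else 0)
        ≤ ∑ u ∈ U, (if sameCluster N u v then (clusterSize N v : ℝ) else 0) := by
    intro v
    by_cases ht : touches N U v
    · rw [if_pos ht]
      obtain ⟨u, hu, huv⟩ := ht
      calc (clusterSize N v : ℝ)
          = (if sameCluster N u v then (clusterSize N v : ℝ) else 0) := by rw [if_pos huv]
        _ ≤ ∑ u ∈ U, (if sameCluster N u v then (clusterSize N v : ℝ) else 0) := by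
            refine Finset.single_le_sum
              (f := fun u => if sameCluster N u v then (clusterSize N v : ℝ) else 0)
              (fun i _ => ?_) hu
            split
            · positivity
            · exact le_rfl
    · rw [if_neg ht]
      refine Finset.sum_nonneg (fun i _ => ?_)
      split
      · positivity
      · exact le_rfl
  calc ∑ v : V, ∑ w : V, (if touches N U v ∧ sameCluster N v w then (1 : ℝ) else 0)
      = ∑ v : V, (if touches N U v then (clusterSize N v : ℝ) else 0) :=
        Finset.sum_congr rfl (fun v _ => step1 v)
    _ ≤ ∑ v : V, ∑ u ∈ U, (if sameCluster N u v then (clusterSize N v : ℝ) else 0) :=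
        Finset.sum_le_sum (fun v _ => step2 v)
    _ = ∑ u ∈ U, ∑ v : V, (if sameCluster N u v then (clusterSize N v : ℝ) else 0) :=
        Finset.sum_comm
    _ = ∑ u ∈ U, (clusterSize N u : ℝ) ^ 2 := by
        refine Finset.sum_congr rfl (fun u hu => ?_)
        have hcong : ∀ v : V, (if sameCluster N u v then (clusterSize N v : ℝ) else 0)
            = (if sameCluster N u v then (clusterSize N u : ℝ) else 0) := by
          intro v
          by_cases h : sameCluster N u v
          · rw [if_pos h, if_pos h]
            exact_mod_cast clusterSize_congr h
          · rw [if_neg h, if_neg h]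
        rw [Finset.sum_congr rfl (fun v _ => hcong v),
          sum_indicator_cluster N u ((clusterSize N u : ℝ))]
        ring


lemma pvar_eq {X : Type*} [Fintype X] {p : X → ℝ} (hp : IsPMF p) (f : X → ℝ) :
    pvar p f = (∑ x : X, p x * f x ^ 2) - (pexp p f) ^ 2 := by
  have expand : ∀ x : X, p x * (f x - pexp p f) ^ 2
      = p x * f x ^ 2 - 2 * pexp p f * (p x * f x) + (pexp p f) ^ 2 * p x := by
    intro x; ring
  rw [pvar, Finset.sum_congr rfl (fun x _ => expand x)]
  rw [Finset.sum_add_distrib, Finset.sum_sub_distrib, ← Finset.mul_sum, ← Finset.mul_sum]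
  rw [show (∑ x : X, p x * f x) = pexp p f from rfl, hp.2]
  ring

lemma pvar_le_sum_sq {X : Type*} [Fintype X] {p : X → ℝ} (hp : IsPMF p) (f : X → ℝ) :
    pvar p f ≤ ∑ x : X, p x * f x ^ 2 := by
  rw [pvar_eq hp f]
  nlinarith [sq_nonneg (pexp p f)]

lemma dacPMF_nonneg {ν : Finset (Sym2 V) → ℝ} (hν0 : ∀ N, 0 ≤ ν N) (ω : V → Bool) :
    0 ≤ dacPMF ν ω :=
  Finset.sum_nonneg (fun N _ => mul_nonneg (hν0 N) (dacCond_nonneg N ω))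

lemma dacPMF_isPMF {ν : Finset (Sym2 V) → ℝ} (hν0 : ∀ N, 0 ≤ ν N)
    (hν1 : ∑ N : Finset (Sym2 V), ν N = 1) : IsPMF (dacPMF ν) := by
  refine ⟨dacPMF_nonneg hν0, ?_⟩
  rw [show (∑ ω : V → Bool, dacPMF ν ω)
      = ∑ ω : V → Bool, ∑ N : Finset (Sym2 V), ν N * dacCond N ω from rfl,
    Finset.sum_comm]
  rw [Finset.sum_congr rfl
    (fun N _ => by rw [← Finset.mul_sum, sum_dacCond N, mul_one])]
  exact hν1

lemma fiber_empty (ω : V → Bool) : fiber (∅ : Finset V) ω = univ := by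
  ext τ; simp [fiber]

lemma gfun_empty (N : Finset (Sym2 V)) (ω : V → Bool) : gfun N (∅ : Finset V) ω = 0 := by
  rw [gfun]
  have : ∀ w : V, ¬ touches N (∅ : Finset V) w := by
    rintro w ⟨u, hu, -⟩; exact absurd hu (Finset.notMem_empty u)
  rw [Finset.sum_congr rfl (fun w _ => dif_neg (this w)), Finset.sum_const_zero, mul_zero]

/-- the magnetization has mean zero under `P_N` -/
lemma sum_dacCond_M (N : Finset (Sym2 V)) :
    ∑ ω : V → Bool, dacCond N ω * ((Fintype.card V : ℝ)⁻¹ * ∑ v : V, spinR (ω v)) = 0 := by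
  have := sum_fiber_M N (∅ : Finset V) (fun _ => false)
  rw [fiber_empty, gfun_empty, mul_zero] at this
  exact this

lemma pexp_M {ν : Finset (Sym2 V) → ℝ} :
    pexp (dacPMF ν) (fun σ => (Fintype.card V : ℝ)⁻¹ * ∑ v : V, spinR (σ v)) = 0 := by
  rw [pexp]
  rw [show (∑ ω : V → Bool, dacPMF ν ω * ((Fintype.card V : ℝ)⁻¹ * ∑ v : V, spinR (ω v)))
      = ∑ ω : V → Bool, ∑ N : Finset (Sym2 V),
          ν N * (dacCond N ω * ((Fintype.card V : ℝ)⁻¹ * ∑ v : V, spinR (ω v)))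
    from Finset.sum_congr rfl (fun ω _ => by
      simp only [dacPMF]; rw [Finset.sum_mul]; exact
        Finset.sum_congr rfl (fun N _ => by ring)), Finset.sum_comm]
  refine Finset.sum_eq_zero (fun N _ => ?_)
  rw [← Finset.mul_sum, sum_dacCond_M N, mul_zero]

/-- second moment of the magnetization under `P_N` -/
lemma sum_dacCond_Msq (N : Finset (Sym2 V)) :
    ∑ ω : V → Bool, dacCond N ω * ((Fintype.card V : ℝ)⁻¹ * ∑ v : V, spinR (ω v)) ^ 2
      = ((Fintype.card V : ℝ)⁻¹) ^ 2 * ∑ v : V, (clusterSize N v : ℝ) := by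
  have inner : ∀ v w : V,
      ∑ ω : V → Bool, dacCond N ω * (spinR (ω v) * spinR (ω w))
        = (if sameCluster N v w then (1 : ℝ) else 0) := sum_dacCond_two_point N
  calc ∑ ω : V → Bool, dacCond N ω * ((Fintype.card V : ℝ)⁻¹ * ∑ v : V, spinR (ω v)) ^ 2
      = ∑ ω : V → Bool, ((Fintype.card V : ℝ)⁻¹) ^ 2 *
          ∑ v : V, ∑ w : V, dacCond N ω * (spinR (ω v) * spinR (ω w)) := by
        refine Finset.sum_congr rfl (fun ω _ => ?_)
        have hsq : (∑ v : V, spinR (ω v)) ^ 2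
            = ∑ v : V, ∑ w : V, spinR (ω v) * spinR (ω w) := by
          rw [pow_two, Finset.sum_mul_sum]
        calc dacCond N ω * ((Fintype.card V : ℝ)⁻¹ * ∑ v : V, spinR (ω v)) ^ 2
            = ((Fintype.card V : ℝ)⁻¹) ^ 2 *
                (dacCond N ω * ∑ v : V, ∑ w : V, spinR (ω v) * spinR (ω w)) := by
              rw [mul_pow, hsq]; ring
          _ = _ := by
              congr 1
              rw [Finset.mul_sum]
              exact Finset.sum_congr rfl (fun v _ => by rw [Finset.mul_sum])
    _ = ((Fintype.card V : ℝ)⁻¹) ^ 2 * ∑ v : V, ∑ w : V,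
          ∑ ω : V → Bool, dacCond N ω * (spinR (ω v) * spinR (ω w)) := by
        rw [← Finset.mul_sum, Finset.sum_comm]
        congr 1
        exact Finset.sum_congr rfl (fun v _ => Finset.sum_comm)
    _ = ((Fintype.card V : ℝ)⁻¹) ^ 2 * ∑ v : V, (clusterSize N v : ℝ) := by
        congr 1
        refine Finset.sum_congr rfl (fun v _ => ?_)
        rw [Finset.sum_congr rfl (fun w _ => inner v w), sum_indicator_cluster N v 1, mul_one]

lemma pvar_M {ν : Finset (Sym2 V) → ℝ} (hν0 : ∀ N, 0 ≤ ν N)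
    (hν1 : ∑ N : Finset (Sym2 V), ν N = 1) :
    pvar (dacPMF ν) (fun σ => (Fintype.card V : ℝ)⁻¹ * ∑ v : V, spinR (σ v))
      = ((Fintype.card V : ℝ)⁻¹) ^ 2 *
          ∑ N : Finset (Sym2 V), ν N * ∑ v : V, (clusterSize N v : ℝ) := by
  rw [pvar_eq (dacPMF_isPMF hν0 hν1), pexp_M]
  rw [show (∑ ω : V → Bool,
        dacPMF ν ω * ((fun σ => (Fintype.card V : ℝ)⁻¹ * ∑ v : V, spinR (σ v)) ω) ^ 2)
      = ∑ ω : V → Bool, ∑ N : Finset (Sym2 V),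
          ν N * (dacCond N ω * ((Fintype.card V : ℝ)⁻¹ * ∑ v : V, spinR (ω v)) ^ 2)
    from Finset.sum_congr rfl (fun ω _ => by
      simp only [dacPMF]; rw [Finset.sum_mul]; exact
        Finset.sum_congr rfl (fun N _ => by ring)), Finset.sum_comm]
  have h2 : ∀ N : Finset (Sym2 V),
      (∑ ω : V → Bool,
        ν N * (dacCond N ω * ((Fintype.card V : ℝ)⁻¹ * ∑ v : V, spinR (ω v)) ^ 2))
      = ν N * (((Fintype.card V : ℝ)⁻¹) ^ 2 * ∑ v : V, (clusterSize N v : ℝ)) := by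
    intro N
    rw [← Finset.mul_sum, sum_dacCond_Msq N]
  rw [Finset.sum_congr rfl (fun N _ => h2 N), Finset.mul_sum,
    show ((0 : ℝ)) ^ 2 = 0 from by norm_num, sub_zero]
  exact Finset.sum_congr rfl (fun N _ => by ring)

lemma cexp_eq_fiber (p : (V → Bool) → ℝ) (U : Finset V) (f : (V → Bool) → ℝ)
    (ω : V → Bool) :
    cexp p U f ω = (∑ ω' ∈ fiber U ω, p ω' * f ω') / (∑ ω' ∈ fiber U ω, p ω') := by
  have h : ∀ (inst : DecidablePred fun ω' : V → Bool => ∀ v ∈ U, ω' v = ω v),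
      (@Finset.filter _ (fun ω' : V → Bool => ∀ v ∈ U, ω' v = ω v) inst univ) = fiber U ω := by
    intro inst; ext τ; simp [fiber]
  simp only [cexp]
  rw [h _]

lemma cexp_congr_fiber (p : (V → Bool) → ℝ) (U : Finset V) (f : (V → Bool) → ℝ)
    {ω ω' : V → Bool} (h : ω' ∈ fiber U ω) :
    cexp p U f ω' = cexp p U f ω := by
  rw [cexp_eq_fiber p U f, cexp_eq_fiber p U f, fiber_eq_of_agree (mem_fiber.mp h)]


/-- the per-fiber Cauchy–Schwarz step -/
lemma fiber_csq {ν : Finset (Sym2 V) → ℝ} (hν0 : ∀ N, 0 ≤ ν N) (U : Finset V) (ω : V → Bool) :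
    ∑ ω' ∈ fiber U ω, dacPMF ν ω' *
        (cexp (dacPMF ν) U (fun σ => (Fintype.card V : ℝ)⁻¹ * ∑ v : V, spinR (σ v)) ω') ^ 2
      ≤ ∑ ω' ∈ fiber U ω, ∑ N : Finset (Sym2 V), ν N * (dacCond N ω' * (gfun N U ω') ^ 2) := by
  set M : (V → Bool) → ℝ := fun σ => (Fintype.card V : ℝ)⁻¹ * ∑ v : V, spinR (σ v) with hM
  set x : Finset (Sym2 V) → ℝ := fun N => ν N * ∑ ω' ∈ fiber U ω, dacCond N ω' with hx
  have hx0 : ∀ N, 0 ≤ x N := fun N =>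
    mul_nonneg (hν0 N) (Finset.sum_nonneg (fun ω' _ => dacCond_nonneg N ω'))
  set g : Finset (Sym2 V) → ℝ := fun N => gfun N U ω with hg
  have hB : (∑ ω' ∈ fiber U ω, dacPMF ν ω') = ∑ N : Finset (Sym2 V), x N := by
    simp only [dacPMF]
    rw [Finset.sum_comm]
    exact Finset.sum_congr rfl (fun N _ => (Finset.mul_sum _ _ _).symm)
  have hA : (∑ ω' ∈ fiber U ω, dacPMF ν ω' * M ω') = ∑ N : Finset (Sym2 V), x N * g N := by
    calc ∑ ω' ∈ fiber U ω, dacPMF ν ω' * M ω'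
        = ∑ ω' ∈ fiber U ω, ∑ N : Finset (Sym2 V), ν N * (dacCond N ω' * M ω') := by
          refine Finset.sum_congr rfl (fun ω' _ => ?_)
          simp only [dacPMF]
          rw [Finset.sum_mul]
          exact Finset.sum_congr rfl (fun N _ => by ring)
      _ = ∑ N : Finset (Sym2 V), ∑ ω' ∈ fiber U ω, ν N * (dacCond N ω' * M ω') :=
          Finset.sum_comm
      _ = ∑ N : Finset (Sym2 V), x N * g N := by
          refine Finset.sum_congr rfl (fun N _ => ?_)
          rw [← Finset.mul_sum, hM, sum_fiber_M N U ω, hx, hg]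
          ring
  have hRHS : (∑ ω' ∈ fiber U ω, ∑ N : Finset (Sym2 V), ν N * (dacCond N ω' * (gfun N U ω') ^ 2))
      = ∑ N : Finset (Sym2 V), x N * g N ^ 2 := by
    rw [Finset.sum_comm]
    refine Finset.sum_congr rfl (fun N _ => ?_)
    calc ∑ ω' ∈ fiber U ω, ν N * (dacCond N ω' * (gfun N U ω') ^ 2)
        = ∑ ω' ∈ fiber U ω, (ν N * g N ^ 2) * dacCond N ω' := by
          refine Finset.sum_congr rfl (fun ω' hω' => ?_)
          rw [gfun_congr (mem_fiber.mp hω')]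
          simp only [hg]
          ring
      _ = x N * g N ^ 2 := by rw [← Finset.mul_sum, hx]; ring
  have hLHS : (∑ ω' ∈ fiber U ω, dacPMF ν ω' * (cexp (dacPMF ν) U M ω') ^ 2)
      = (∑ ω' ∈ fiber U ω, dacPMF ν ω') * (cexp (dacPMF ν) U M ω) ^ 2 := by
    rw [Finset.sum_mul]
    exact Finset.sum_congr rfl (fun ω' hω' => by rw [cexp_congr_fiber _ _ _ hω'])
  rw [hLHS, hRHS, hB]
  have hcexp : cexp (dacPMF ν) U M ω
      = (∑ N : Finset (Sym2 V), x N * g N) / (∑ N : Finset (Sym2 V), x N) := by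
    rw [cexp_eq_fiber, hA, hB]
  rw [hcexp]
  have cs : (∑ N : Finset (Sym2 V), x N * g N) ^ 2
      ≤ (∑ N : Finset (Sym2 V), x N) * ∑ N : Finset (Sym2 V), x N * g N ^ 2 := by
    have h := Finset.sum_mul_sq_le_sq_mul_sq univ (fun N => Real.sqrt (x N))
      (fun N => Real.sqrt (x N) * g N)
    have e1 : ∀ N : Finset (Sym2 V),
        Real.sqrt (x N) * (Real.sqrt (x N) * g N) = x N * g N := by
      intro N; rw [← mul_assoc, Real.mul_self_sqrt (hx0 N)]
    have e2 : ∀ N : Finset (Sym2 V), Real.sqrt (x N) ^ 2 = x N := fun N =>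
      Real.sq_sqrt (hx0 N)
    have e3 : ∀ N : Finset (Sym2 V), (Real.sqrt (x N) * g N) ^ 2 = x N * g N ^ 2 := by
      intro N; rw [mul_pow, e2 N]
    rwa [Finset.sum_congr rfl (fun N _ => e1 N), Finset.sum_congr rfl (fun N _ => e2 N),
      Finset.sum_congr rfl (fun N _ => e3 N)] at h
  rcases eq_or_lt_of_le (Finset.sum_nonneg (fun N _ => hx0 N) :
      (0:ℝ) ≤ ∑ N : Finset (Sym2 V), x N) with h0 | hpos
  · rw [← h0, zero_mul]
    refine Finset.sum_nonneg (fun N _ => ?_)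
    exact mul_nonneg (hx0 N) (sq_nonneg _)
  · have hne : (∑ N : Finset (Sym2 V), x N) ≠ 0 := ne_of_gt hpos
    have hkey : (∑ N : Finset (Sym2 V), x N) *
        ((∑ N : Finset (Sym2 V), x N * g N) / (∑ N : Finset (Sym2 V), x N)) ^ 2
        = (∑ N : Finset (Sym2 V), x N * g N) ^ 2 / (∑ N : Finset (Sym2 V), x N) := by
      field_simp
    rw [hkey, div_le_iff₀ hpos]
    calc (∑ N : Finset (Sym2 V), x N * g N) ^ 2
        ≤ (∑ N : Finset (Sym2 V), x N) * ∑ N : Finset (Sym2 V), x N * g N ^ 2 := cs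
      _ = (∑ N : Finset (Sym2 V), x N * g N ^ 2) * (∑ N : Finset (Sym2 V), x N) := by ring


lemma sum_p_cexp_sq_le {ν : Finset (Sym2 V) → ℝ} (hν0 : ∀ N, 0 ≤ ν N) (U : Finset V) :
    ∑ ω : V → Bool, dacPMF ν ω *
        (cexp (dacPMF ν) U (fun σ => (Fintype.card V : ℝ)⁻¹ * ∑ v : V, spinR (σ v)) ω) ^ 2
      ≤ ∑ N : Finset (Sym2 V), ν N * ∑ ω : V → Bool, dacCond N ω * (gfun N U ω) ^ 2 := by
  have main : ∑ ω : V → Bool, dacPMF ν ω *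
        (cexp (dacPMF ν) U (fun σ => (Fintype.card V : ℝ)⁻¹ * ∑ v : V, spinR (σ v)) ω) ^ 2
      ≤ ∑ ω : V → Bool, ∑ N : Finset (Sym2 V), ν N * (dacCond N ω * (gfun N U ω) ^ 2) := by
    have hdec : DecidableEq ({u // u ∈ U} → Bool) := inferInstance
    set φ : (V → Bool) → ({u // u ∈ U} → Bool) := fun ω u => ω u.1 with hφ
    rw [← Finset.sum_fiberwise univ φ (fun ω => dacPMF ν ω *
        (cexp (dacPMF ν) U (fun σ => (Fintype.card V : ℝ)⁻¹ * ∑ v : V, spinR (σ v)) ω) ^ 2),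
      ← Finset.sum_fiberwise univ φ
        (fun ω => ∑ N : Finset (Sym2 V), ν N * (dacCond N ω * (gfun N U ω) ^ 2))]
    refine Finset.sum_le_sum (fun η _ => ?_)
    rcases (univ.filter fun ω : V → Bool => φ ω = η).eq_empty_or_nonempty with h | h
    · rw [h]
      simp
    · obtain ⟨ω₀, hω₀⟩ := h
      have h0 : φ ω₀ = η := (Finset.mem_filter.mp hω₀).2
      have hfib : (univ.filter fun ω : V → Bool => φ ω = η) = fiber U ω₀ := by
        ext τ
        simp only [Finset.mem_filter, Finset.mem_univ, true_and, mem_fiber]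
        constructor
        · intro hτ v hv
          exact congrFun (hτ.trans h0.symm) ⟨v, hv⟩
        · intro hτ
          rw [← h0]
          funext u
          exact hτ u.1 u.2
      rw [hfib]
      exact fiber_csq hν0 U ω₀
  refine le_trans main (le_of_eq ?_)
  rw [Finset.sum_comm]
  exact Finset.sum_congr rfl (fun N _ => (Finset.mul_sum _ _ _).symm)

/-- the per-set clue bound -/
lemma clue_bound {ν : Finset (Sym2 V) → ℝ} (hν0 : ∀ N, 0 ≤ ν N)
    (hν1 : ∑ N : Finset (Sym2 V), ν N = 1) (hne : Nonempty V) (U : Finset V) :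
    clue (dacPMF ν) (fun σ => (Fintype.card V : ℝ)⁻¹ * ∑ v : V, spinR (σ v)) U
      ≤ (∑ u ∈ U, ∑ N : Finset (Sym2 V), ν N * (clusterSize N u : ℝ) ^ 2) /
        (∑ N : Finset (Sym2 V), ν N * ∑ v : V, (clusterSize N v : ℝ)) := by
  haveI := hne
  set Mf : (V → Bool) → ℝ := fun σ => (Fintype.card V : ℝ)⁻¹ * ∑ v : V, spinR (σ v) with hMf
  set c : ℝ := ((Fintype.card V : ℝ))⁻¹ with hc
  set D : ℝ := ∑ N : Finset (Sym2 V), ν N * ∑ v : V, (clusterSize N v : ℝ) with hD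
  set X : ℝ := ∑ u ∈ U, ∑ N : Finset (Sym2 V), ν N * (clusterSize N u : ℝ) ^ 2 with hX
  have hnpos : (0:ℝ) < (Fintype.card V : ℝ) := by
    exact_mod_cast Fintype.card_pos
  have hDpos : 0 < D := by
    have hge : ∀ N : Finset (Sym2 V), ν N * (Fintype.card V : ℝ)
        ≤ ν N * ∑ v : V, (clusterSize N v : ℝ) := by
      intro N
      refine mul_le_mul_of_nonneg_left ?_ (hν0 N)
      calc (Fintype.card V : ℝ) = ∑ _v : V, (1:ℝ) := by
            rw [Finset.sum_const, nsmul_eq_mul, mul_one, Finset.card_univ]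
        _ ≤ ∑ v : V, (clusterSize N v : ℝ) := by
            refine Finset.sum_le_sum (fun v _ => ?_)
            exact_mod_cast one_le_clusterSize N v
    calc (0:ℝ) < (Fintype.card V : ℝ) := hnpos
      _ = ∑ N : Finset (Sym2 V), ν N * (Fintype.card V : ℝ) := by
          rw [← Finset.sum_mul, hν1, one_mul]
      _ ≤ D := Finset.sum_le_sum (fun N _ => hge N)
  have hvarM : pvar (dacPMF ν) Mf = c ^ 2 * D := by
    rw [hMf]
    exact pvar_M hν0 hν1
  have hc2 : (0:ℝ) < c ^ 2 := by positivity
  have hvarne : pvar (dacPMF ν) Mf ≠ 0 := by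
    rw [hvarM]
    positivity
  rw [clue, if_neg hvarne, hvarM]
  have hnum : pvar (dacPMF ν) (cexp (dacPMF ν) U Mf) ≤ c ^ 2 * X := by
    calc pvar (dacPMF ν) (cexp (dacPMF ν) U Mf)
        ≤ ∑ ω : V → Bool, dacPMF ν ω * (cexp (dacPMF ν) U Mf ω) ^ 2 :=
          pvar_le_sum_sq (dacPMF_isPMF hν0 hν1) _
      _ ≤ ∑ N : Finset (Sym2 V), ν N * ∑ ω : V → Bool, dacCond N ω * (gfun N U ω) ^ 2 := by
          rw [hMf]
          exact sum_p_cexp_sq_le hν0 U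
      _ = ∑ N : Finset (Sym2 V), ν N * (c ^ 2 * ∑ v : V, ∑ w : V,
            (if touches N U v ∧ sameCluster N v w then (1 : ℝ) else 0)) :=
          Finset.sum_congr rfl (fun N _ => by rw [sum_dacCond_gsq N U])
      _ ≤ ∑ N : Finset (Sym2 V), ν N * (c ^ 2 * ∑ u ∈ U, (clusterSize N u : ℝ) ^ 2) := by
          refine Finset.sum_le_sum (fun N _ => ?_)
          refine mul_le_mul_of_nonneg_left ?_ (hν0 N)
          exact mul_le_mul_of_nonneg_left (counting N U) (le_of_lt hc2)
      _ = c ^ 2 * X := by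
          rw [hX, Finset.mul_sum]
          have hstep : ∀ N : Finset (Sym2 V),
              ν N * (c ^ 2 * ∑ u ∈ U, (clusterSize N u : ℝ) ^ 2)
                = ∑ u ∈ U, c ^ 2 * (ν N * (clusterSize N u : ℝ) ^ 2) := by
            intro N
            rw [Finset.mul_sum, Finset.mul_sum]
            exact Finset.sum_congr rfl (fun u _ => by ring)
          rw [Finset.sum_congr rfl (fun N _ => hstep N), Finset.sum_comm]
          exact Finset.sum_congr rfl (fun u _ => by rw [Finset.mul_sum])
  calc pvar (dacPMF ν) (cexp (dacPMF ν) U Mf) / (c ^ 2 * D)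
      ≤ (c ^ 2 * X) / (c ^ 2 * D) := by
        apply div_le_div_of_nonneg_right hnum ?_ |>.trans_eq rfl
        positivity
    _ = X / D := mul_div_mul_left X D (ne_of_gt hc2)

end SR

open Finset SR

/-- **Clue bound for the magnetization of divide-and-color measures**
(Proposition 6.3 of the paper):
`E[clue(M|𝒰)] ≤ δ · (Σ_v E_ν[|C_v|²]) / (Σ_v E_ν[|C_v|])`. -/
theorem dac_clue_magnetization
    {V : Type*} [Fintype V] [DecidableEq V]
    (G : SimpleGraph V) [DecidableRel G.Adj]
    (ν : Finset (Sym2 V) → ℝ)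
    (hν0 : ∀ N, 0 ≤ ν N) (hν1 : ∑ N : Finset (Sym2 V), ν N = 1)
    (hνsupp : ∀ N : Finset (Sym2 V), ν N ≠ 0 → N ⊆ G.edgeFinset)
    (ν' : Finset V → ℝ) (hν' : IsSubsetDist ν')
    (δ : ℝ)
    (hδ : ∀ v : V, ∑ S ∈ univ.filter (fun S : Finset V => v ∈ S), ν' S ≤ δ) :
    eClue (dacPMF ν) (fun σ => (Fintype.card V : ℝ)⁻¹ * ∑ v : V, spinR (σ v)) ν'
      ≤ δ * ((∑ v : V, ∑ N : Finset (Sym2 V), ν N * (clusterSize N v : ℝ) ^ 2) /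
             (∑ v : V, ∑ N : Finset (Sym2 V), ν N * (clusterSize N v : ℝ))) := by
  by_cases hne : Nonempty V
  · -- the denominator in the two forms
    have hDD : (∑ v : V, ∑ N : Finset (Sym2 V), ν N * (clusterSize N v : ℝ))
        = ∑ N : Finset (Sym2 V), ν N * ∑ v : V, (clusterSize N v : ℝ) := by
      rw [Finset.sum_comm]
      exact Finset.sum_congr rfl (fun N _ => (Finset.mul_sum _ _ _).symm)
    set E2 : V → ℝ := fun u => ∑ N : Finset (Sym2 V), ν N * (clusterSize N u : ℝ) ^ 2 with hE2
    set D : ℝ := ∑ N : Finset (Sym2 V), ν N * ∑ v : V, (clusterSize N v : ℝ) with hD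
    have hE2nonneg : ∀ u : V, 0 ≤ E2 u := fun u =>
      Finset.sum_nonneg (fun N _ => mul_nonneg (hν0 N) (sq_nonneg _))
    have hnpos : (0:ℝ) < (Fintype.card V : ℝ) := by
      haveI := hne
      exact_mod_cast Fintype.card_pos
    have hDpos : 0 < D := by
      have hge : ∀ N : Finset (Sym2 V), ν N * (Fintype.card V : ℝ)
          ≤ ν N * ∑ v : V, (clusterSize N v : ℝ) := by
        intro N
        refine mul_le_mul_of_nonneg_left ?_ (hν0 N)
        calc (Fintype.card V : ℝ) = ∑ _v : V, (1:ℝ) := by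
              rw [Finset.sum_const, nsmul_eq_mul, mul_one, Finset.card_univ]
          _ ≤ ∑ v : V, (clusterSize N v : ℝ) := by
              refine Finset.sum_le_sum (fun v _ => ?_)
              exact_mod_cast one_le_clusterSize N v
      calc (0:ℝ) < (Fintype.card V : ℝ) := hnpos
        _ = ∑ N : Finset (Sym2 V), ν N * (Fintype.card V : ℝ) := by
            rw [← Finset.sum_mul, hν1, one_mul]
        _ ≤ D := Finset.sum_le_sum (fun N _ => hge N)
    have hswap : (∑ S : Finset V, ∑ u ∈ S, ν' S * E2 u)
        = ∑ u : V, (∑ S ∈ univ.filter (fun S : Finset V => u ∈ S), ν' S) * E2 u := by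
      have h1 : ∀ S : Finset V,
          (∑ u ∈ S, ν' S * E2 u) = ∑ u : V, if u ∈ S then ν' S * E2 u else 0 := by
        intro S
        rw [Finset.sum_ite_mem, Finset.univ_inter]
      rw [Finset.sum_congr rfl (fun S _ => h1 S), Finset.sum_comm]
      refine Finset.sum_congr rfl (fun u _ => ?_)
      rw [Finset.sum_mul, Finset.sum_filter]
    calc eClue (dacPMF ν) (fun σ => (Fintype.card V : ℝ)⁻¹ * ∑ v : V, spinR (σ v)) ν'
        = ∑ S : Finset V, ν' S *
            clue (dacPMF ν) (fun σ => (Fintype.card V : ℝ)⁻¹ * ∑ v : V, spinR (σ v)) S := rfl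
      _ ≤ ∑ S : Finset V, ν' S * ((∑ u ∈ S, E2 u) / D) := by
          refine Finset.sum_le_sum (fun S _ => ?_)
          exact mul_le_mul_of_nonneg_left (clue_bound hν0 hν1 hne S) (hν'.1 S)
      _ = (∑ S : Finset V, ∑ u ∈ S, ν' S * E2 u) / D := by
          rw [Finset.sum_div]
          refine Finset.sum_congr rfl (fun S _ => ?_)
          rw [← mul_div_assoc, Finset.mul_sum]
      _ = (∑ u : V, (∑ S ∈ univ.filter (fun S : Finset V => u ∈ S), ν' S) * E2 u) / D := by
          rw [hswap]
      _ ≤ (∑ u : V, δ * E2 u) / D := by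
          refine div_le_div_of_nonneg_right ?_ hDpos.le |>.trans_eq rfl
          refine Finset.sum_le_sum (fun u _ => ?_)
          exact mul_le_mul_of_nonneg_right (hδ u) (hE2nonneg u)
      _ = δ * ((∑ u : V, E2 u) / D) := by
          rw [← Finset.mul_sum, mul_div_assoc]
      _ = δ * ((∑ v : V, ∑ N : Finset (Sym2 V), ν N * (clusterSize N v : ℝ) ^ 2) /
             (∑ v : V, ∑ N : Finset (Sym2 V), ν N * (clusterSize N v : ℝ))) := by
          rw [hDD]
  · haveI hE : IsEmpty V := not_nonempty_iff.mp hne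
    have hM0 : (fun σ : V → Bool => (Fintype.card V : ℝ)⁻¹ * ∑ v : V, spinR (σ v))
        = fun _ => (0:ℝ) := by
      funext σ
      rw [Finset.univ_eq_empty, Finset.sum_empty, mul_zero]
    have hvar : pvar (dacPMF ν) (fun _ : V → Bool => (0:ℝ)) = 0 := by
      simp [pvar, pexp]
    have hclue : ∀ S : Finset V, clue (dacPMF ν) (fun _ : V → Bool => (0:ℝ)) S = 0 :=
      fun S => if_pos hvar
    have hzero : eClue (dacPMF ν)
        (fun σ : V → Bool => (Fintype.card V : ℝ)⁻¹ * ∑ v : V, spinR (σ v)) ν' = 0 := by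
      rw [hM0, eClue]
      exact Finset.sum_eq_zero (fun S _ => by rw [hclue S, mul_zero])
    rw [hzero, Finset.univ_eq_empty, Finset.sum_empty, Finset.sum_empty, zero_div, mul_zero]
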